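/- For s ∈ ℝ, the integral B(s) = ∫_{a,b≥0, a+b≤1} da db / ((a+b)(1-a)(1-b))^s is finite if and only if s < 2. -/

import Mathlib

open MeasureTheory Real Set
open scoped ENNReal

private lemma meas_f (s : ℝ) : Measurable fun p : ℝ × ℝ =>
    ENNReal.ofReal (((p.1 + p.2) * (1 - p.1) * (1 - p.2)) ^ (-s)) := by
  apply Measurable.ennreal_ofReal
  exact (((measurable_fst.add measurable_snd).mul
    (measurable_const.sub measurable_fst)).mul
    (measurable_const.sub measurable_snd)).pow measurable_const

private lemma oneD (t c : ℝ) (hc : 0 < c) (ht : -1 < t) :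
    ∫⁻ x in Set.Ioc 0 c, ENNReal.ofReal (x ^ t) < ⊤ := by
  have h : IntegrableOn (fun x : ℝ => x ^ t) (Set.Ioc 0 c) := by
    rw [integrableOn_Ioc_iff_integrableOn_Ioo]
    exact (intervalIntegral.integrableOn_Ioo_rpow_iff hc).2 ht
  exact h.setLIntegral_lt_top

private lemma corner_int (s c : ℝ) (hs : s < 2) (hc : 0 ≤ c) :
    ∫⁻ p : ℝ × ℝ in {p | p.1 ∈ Ioo (1/2:ℝ) 1 ∧ p.2 ∈ Icc 0 (1 - p.1)},
      ENNReal.ofReal (c * (1 - p.1) ^ (-s)) < ⊤ := by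
  set W : Set (ℝ × ℝ) := {p | p.1 ∈ Ioo (1/2:ℝ) 1 ∧ p.2 ∈ Icc 0 (1 - p.1)} with hWdef
  have hW : MeasurableSet W := by
    have : W = ({p : ℝ × ℝ | 1/2 < p.1} ∩ {p | p.1 < 1}) ∩
        ({p | 0 ≤ p.2} ∩ {p | p.2 ≤ 1 - p.1}) := by
      ext p; simp [hWdef, and_assoc]
    rw [this]
    exact (((measurableSet_lt measurable_const measurable_fst).inter
      (measurableSet_lt measurable_fst measurable_const)).inter
      ((measurableSet_le measurable_const measurable_snd).inter
      (measurableSet_le measurable_snd (measurable_const.sub measurable_fst))))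
  have hG : Measurable fun p : ℝ × ℝ => ENNReal.ofReal (c * (1 - p.1) ^ (-s)) := by
    apply Measurable.ennreal_ofReal
    exact measurable_const.mul ((measurable_const.sub measurable_fst).pow measurable_const)
  rw [← lintegral_indicator hW, Measure.volume_eq_prod,
    lintegral_prod _ (hG.indicator hW).aemeasurable]
  have hinner : ∀ a : ℝ, (∫⁻ b, W.indicator
        (fun p : ℝ × ℝ => ENNReal.ofReal (c * (1 - p.1) ^ (-s))) (a, b) ∂volume)
      = (Ioo (1/2:ℝ) 1).indicator
        (fun a => ENNReal.ofReal (c * (1 - a) ^ (-s)) * ENNReal.ofReal (1 - a)) a := by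
    intro a
    by_cases ha : a ∈ Ioo (1/2:ℝ) 1
    · have : (fun b => W.indicator
          (fun p : ℝ × ℝ => ENNReal.ofReal (c * (1 - p.1) ^ (-s))) (a, b))
          = (Icc (0:ℝ) (1 - a)).indicator
            (fun _ => ENNReal.ofReal (c * (1 - a) ^ (-s))) := by
        funext b
        by_cases hb : b ∈ Icc (0:ℝ) (1 - a)
        · rw [Set.indicator_of_mem hb, Set.indicator_of_mem (by exact ⟨ha, hb⟩)]
        · rw [Set.indicator_of_notMem hb, Set.indicator_of_notMem (by
            intro h; exact hb h.2)]
      rw [this, lintegral_indicator measurableSet_Icc, setLIntegral_const,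
        Set.indicator_of_mem ha, Real.volume_Icc, sub_zero]
    · have : (fun b => W.indicator
          (fun p : ℝ × ℝ => ENNReal.ofReal (c * (1 - p.1) ^ (-s))) (a, b))
          = fun _ => 0 := by
        funext b
        rw [Set.indicator_of_notMem (by intro h; exact ha h.1)]
      rw [this, lintegral_zero, Set.indicator_of_notMem ha]
  simp only [hinner]
  rw [lintegral_indicator measurableSet_Ioo]
  have heq : ∀ a ∈ Ioo (1/2:ℝ) 1,
      ENNReal.ofReal (c * (1 - a) ^ (-s)) * ENNReal.ofReal (1 - a)
        = ENNReal.ofReal (c * (1 - a) ^ (-s) * (1 - a)) := by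
    intro a ha
    rw [ENNReal.ofReal_mul (mul_nonneg hc (Real.rpow_nonneg (by linarith [ha.2]) _))]
  calc ∫⁻ a in Ioo (1/2:ℝ) 1,
        ENNReal.ofReal (c * (1 - a) ^ (-s)) * ENNReal.ofReal (1 - a)
      = ∫⁻ a in Ioo (1/2:ℝ) 1, ENNReal.ofReal (c * (1 - a) ^ (-s) * (1 - a)) :=
        setLIntegral_congr_fun measurableSet_Ioo heq
    _ < ⊤ := by
        have key : IntegrableOn (fun a : ℝ => c * (1 - a) ^ (-s) * (1 - a))
            (Ioo (1/2:ℝ) 1) := by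
          have h1 : IntervalIntegrable (fun x : ℝ => x ^ (1 - s)) volume 0 (1/2) :=
            intervalIntegral.intervalIntegrable_rpow' (by linarith)
          have h2 := h1.comp_sub_left 1
          rw [intervalIntegrable_iff] at h2
          have h3 : IntegrableOn (fun x : ℝ => (1 - x) ^ (1 - s)) (Ioo (1/2:ℝ) 1) := by
            have he : Set.uIoc ((1:ℝ) - 0) (1 - 1/2) = Ioc (1/2:ℝ) 1 := by
              simp only [Set.uIoc]; norm_num
            rw [he] at h2
            exact h2.mono_set Set.Ioo_subset_Ioc_self
          have h4 : IntegrableOn (fun x : ℝ => c * (1 - x) ^ (1 - s))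
              (Ioo (1/2:ℝ) 1) := h3.const_mul c
          apply h4.congr_fun ?_ measurableSet_Ioo
          intro a ha
          have h1a : (0:ℝ) < 1 - a := by linarith [ha.2]
          simp only
          rw [show (1:ℝ) - s = -s + 1 by ring, Real.rpow_add_one h1a.ne']
          ring
        exact key.setLIntegral_lt_top

private lemma origin_div (s : ℝ) (hs : 2 ≤ s) :
    ∫⁻ p : ℝ × ℝ in {p | p.1 ∈ Ioc (0:ℝ) (1/4) ∧ p.2 ∈ Ioc 0 p.1},
      ENNReal.ofReal ((2 * p.1) ^ (-s)) = ⊤ := by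
  set W : Set (ℝ × ℝ) := {p | p.1 ∈ Ioc (0:ℝ) (1/4) ∧ p.2 ∈ Ioc 0 p.1} with hWdef
  have hW : MeasurableSet W := by
    have : W = ({p : ℝ × ℝ | 0 < p.1} ∩ {p | p.1 ≤ 1/4}) ∩
        ({p | 0 < p.2} ∩ {p | p.2 ≤ p.1}) := by
      ext p; simp [hWdef, and_assoc]
    rw [this]
    exact (((measurableSet_lt measurable_const measurable_fst).inter
      (measurableSet_le measurable_fst measurable_const)).inter
      ((measurableSet_lt measurable_const measurable_snd).inter
      (measurableSet_le measurable_snd measurable_fst)))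
  have hG : Measurable fun p : ℝ × ℝ => ENNReal.ofReal ((2 * p.1) ^ (-s)) := by
    apply Measurable.ennreal_ofReal
    exact (measurable_const.mul measurable_fst).pow measurable_const
  rw [← lintegral_indicator hW, Measure.volume_eq_prod,
    lintegral_prod _ (hG.indicator hW).aemeasurable]
  have hinner : ∀ a : ℝ, (∫⁻ b, W.indicator
        (fun p : ℝ × ℝ => ENNReal.ofReal ((2 * p.1) ^ (-s))) (a, b) ∂volume)
      = (Ioc (0:ℝ) (1/4)).indicator
        (fun a => ENNReal.ofReal ((2 * a) ^ (-s)) * ENNReal.ofReal a) a := by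
    intro a
    by_cases ha : a ∈ Ioc (0:ℝ) (1/4)
    · have : (fun b => W.indicator
          (fun p : ℝ × ℝ => ENNReal.ofReal ((2 * p.1) ^ (-s))) (a, b))
          = (Ioc (0:ℝ) a).indicator (fun _ => ENNReal.ofReal ((2 * a) ^ (-s))) := by
        funext b
        by_cases hb : b ∈ Ioc (0:ℝ) a
        · rw [Set.indicator_of_mem hb, Set.indicator_of_mem (by exact ⟨ha, hb⟩)]
        · rw [Set.indicator_of_notMem hb, Set.indicator_of_notMem (by
            intro h; exact hb h.2)]
      rw [this, lintegral_indicator measurableSet_Ioc, setLIntegral_const,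
        Set.indicator_of_mem ha, Real.volume_Ioc, sub_zero]
    · have : (fun b => W.indicator
          (fun p : ℝ × ℝ => ENNReal.ofReal ((2 * p.1) ^ (-s))) (a, b))
          = fun _ => 0 := by
        funext b
        rw [Set.indicator_of_notMem (by intro h; exact ha h.1)]
      rw [this, lintegral_zero, Set.indicator_of_notMem ha]
  simp only [hinner]
  rw [lintegral_indicator measurableSet_Ioc]
  have heq : ∀ a ∈ Ioc (0:ℝ) (1/4),
      ENNReal.ofReal ((2 * a) ^ (-s)) * ENNReal.ofReal a
        = ENNReal.ofReal ((2 * a) ^ (-s) * a) := by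
    intro a ha
    rw [ENNReal.ofReal_mul (Real.rpow_nonneg (by linarith [ha.1]) _)]
  rw [setLIntegral_congr_fun measurableSet_Ioc heq]
  by_contra hfin
  have hlt : ∫⁻ a in Ioc (0:ℝ) (1/4), ENNReal.ofReal ((2 * a) ^ (-s) * a) < ⊤ :=
    lt_top_iff_ne_top.2 hfin
  have hmeas : Measurable fun a : ℝ => (2 * a) ^ (-s) * a :=
    ((measurable_const.mul measurable_id).pow measurable_const).mul measurable_id
  have hint : IntegrableOn (fun a : ℝ => (2 * a) ^ (-s) * a) (Ioc (0:ℝ) (1/4)) := by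
    refine ⟨hmeas.aestronglyMeasurable.restrict, ?_⟩
    rw [hasFiniteIntegral_iff_ofReal]
    · exact hlt
    · refine (ae_restrict_iff' measurableSet_Ioc).2 (Filter.Eventually.of_forall ?_)
      intro x hx
      exact mul_nonneg (Real.rpow_nonneg (by linarith [hx.1]) _) hx.1.le
  have hint2 : IntegrableOn (fun a : ℝ => (2:ℝ) ^ (-s) * a ^ (1 - s))
      (Ioo (0:ℝ) (1/4)) := by
    refine (hint.mono_set Set.Ioo_subset_Ioc_self).congr_fun ?_ measurableSet_Ioo
    intro a ha
    simp only
    rw [Real.mul_rpow (by norm_num) ha.1.le, show (1:ℝ) - s = -s + 1 by ring,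
      Real.rpow_add_one ha.1.ne']
    ring
  have hint3 : IntegrableOn (fun a : ℝ => a ^ (1 - s)) (Ioo (0:ℝ) (1/4)) := by
    have h5 : IntegrableOn (fun a : ℝ => (2:ℝ) ^ s * ((2:ℝ) ^ (-s) * a ^ (1 - s)))
        (Ioo (0:ℝ) (1/4)) := hint2.const_mul _
    have hconst : (2:ℝ) ^ s * (2:ℝ) ^ (-s) = 1 := by
      rw [← Real.rpow_add (by norm_num)]; simp
    have : (fun a : ℝ => (2:ℝ) ^ s * ((2:ℝ) ^ (-s) * a ^ (1 - s)))
        = fun a : ℝ => a ^ (1 - s) := by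
      funext a; rw [← mul_assoc, hconst, one_mul]
    rwa [this] at h5
  have := (intervalIntegral.integrableOn_Ioo_rpow_iff (by norm_num : (0:ℝ) < 1/4)).1 hint3
  linarith

/-- `B(s) = ∫_{a,b≥0, a+b≤1} ((a+b)(1-a)(1-b))^{-s}` is finite iff `s < 2`. -/
theorem stmt_1 (s : ℝ) :
    (∫⁻ p in {p : ℝ × ℝ | 0 ≤ p.1 ∧ 0 ≤ p.2 ∧ p.1 + p.2 ≤ 1},
      ENNReal.ofReal (((p.1 + p.2) * (1 - p.1) * (1 - p.2)) ^ (-s)) ∂volume) < ⊤ ↔ s < 2 := by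
  set T : Set (ℝ × ℝ) := {p : ℝ × ℝ | 0 ≤ p.1 ∧ 0 ≤ p.2 ∧ p.1 + p.2 ≤ 1} with hT
  set f : ℝ × ℝ → ℝ≥0∞ := fun p =>
    ENNReal.ofReal (((p.1 + p.2) * (1 - p.1) * (1 - p.2)) ^ (-s)) with hf
  constructor
  · -- finite → s < 2
    intro h
    by_contra hs'
    push_neg at hs'
    set V : Set (ℝ × ℝ) := {p | p.1 ∈ Ioc (0:ℝ) (1/4) ∧ p.2 ∈ Ioc 0 p.1} with hV
    have hVT : V ⊆ T := by
      rintro ⟨a, b⟩ ⟨ha, hb⟩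
      exact ⟨ha.1.le, hb.1.le, by simp only at *; linarith [ha.2, hb.2]⟩
    have hpt : ∀ p ∈ V, ENNReal.ofReal ((2 * p.1) ^ (-s)) ≤ f p := by
      rintro ⟨a, b⟩ ⟨ha, hb⟩
      simp only [hf]
      apply ENNReal.ofReal_le_ofReal
      simp only [Set.mem_Ioc] at ha hb
      have h1 : (0:ℝ) < a + b := by linarith [ha.1, hb.1]
      have h2 : (0:ℝ) < 1 - a := by linarith [ha.2]
      have h3 : (0:ℝ) < 1 - b := by linarith [hb.2, ha.2]
      have hbase : (0:ℝ) < (a + b) * (1 - a) * (1 - b) := by positivity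
      have hle : (a + b) * (1 - a) * (1 - b) ≤ 2 * a := by
        have hab : a + b ≤ 2 * a := by linarith [hb.2]
        have hq : (1 - a) * (1 - b) ≤ 1 := by nlinarith
        have hq0 : (0:ℝ) ≤ (1 - a) * (1 - b) := by positivity
        calc (a + b) * (1 - a) * (1 - b) = (a + b) * ((1 - a) * (1 - b)) := by ring
          _ ≤ (2 * a) * 1 := mul_le_mul hab hq hq0 (by linarith)
          _ = 2 * a := by ring
      exact Real.rpow_le_rpow_of_nonpos hbase hle (by linarith)
    have hchain : (⊤ : ℝ≥0∞) ≤ ∫⁻ p in T, f p ∂volume := by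
      calc (⊤ : ℝ≥0∞) = ∫⁻ p in V, ENNReal.ofReal ((2 * p.1) ^ (-s)) ∂volume :=
            (origin_div s hs').symm
        _ ≤ ∫⁻ p in V, f p ∂volume := setLIntegral_mono (meas_f s) hpt
        _ ≤ ∫⁻ p in T, f p ∂volume := lintegral_mono_set hVT
    exact absurd h (by simp [top_le_iff.1 hchain])
  · -- s < 2 → finite
    intro hs
    rcases le_or_gt s 0 with h0 | h0
    · -- s ≤ 0 : integrand bounded by 1
      have hpt : ∀ p ∈ T, f p ≤ 1 := by
        rintro ⟨a, b⟩ ⟨ha, hb, hab⟩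
        simp only [hf]
        apply ENNReal.ofReal_le_one.2
        have h1a : (0:ℝ) ≤ 1 - a := by linarith
        have h1b : (0:ℝ) ≤ 1 - b := by linarith
        apply Real.rpow_le_one (by positivity) ?_ (by linarith)
        have hq : (1 - a) * (1 - b) ≤ 1 := by
          nlinarith [mul_nonneg ha (by linarith : (0:ℝ) ≤ 1 - b)]
        have hq0 : (0:ℝ) ≤ (1 - a) * (1 - b) := mul_nonneg h1a h1b
        calc (a + b) * (1 - a) * (1 - b) = (a + b) * ((1 - a) * (1 - b)) := by ring
          _ ≤ 1 * 1 := mul_le_mul hab hq hq0 (by norm_num)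
          _ = 1 := by ring
      calc ∫⁻ p in T, f p ∂volume ≤ ∫⁻ _ in T, 1 ∂volume :=
            setLIntegral_mono measurable_one hpt
        _ = volume T := setLIntegral_one T
        _ ≤ volume (Icc (0:ℝ) 1 ×ˢ Icc (0:ℝ) 1) := by
            apply measure_mono
            rintro ⟨a, b⟩ ⟨ha, hb, hab⟩
            simp only at *
            exact ⟨⟨ha, by linarith⟩, ⟨hb, by linarith⟩⟩
        _ < ⊤ := by
            rw [Measure.volume_eq_prod, Measure.prod_prod, Real.volume_Icc]
            norm_num
    · -- 0 < s < 2
      set N : Set (ℝ × ℝ) := {p | p.1 = 0} ∪ {p | p.2 = 0} with hN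
      set S1 : Set (ℝ × ℝ) := Ioc (0:ℝ) (1/2) ×ˢ Ioc (0:ℝ) (1/2) with hS1
      set W2 : Set (ℝ × ℝ) := {p | p.1 ∈ Ioo (1/2:ℝ) 1 ∧ p.2 ∈ Icc 0 (1 - p.1)} with hW2
      set W3 : Set (ℝ × ℝ) := {p | p.2 ∈ Ioo (1/2:ℝ) 1 ∧ p.1 ∈ Icc 0 (1 - p.2)} with hW3
      have cover : T ⊆ N ∪ (S1 ∪ (W2 ∪ W3)) := by
        rintro ⟨a, b⟩ ⟨ha, hb, hab⟩
        simp only at ha hb hab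
        rcases eq_or_lt_of_le ha with ha0 | ha0
        · exact Or.inl (Or.inl ha0.symm)
        rcases eq_or_lt_of_le hb with hb0 | hb0
        · exact Or.inl (Or.inr hb0.symm)
        rcases le_or_gt a (1/2) with ha2 | ha2
        · rcases le_or_gt b (1/2) with hb2 | hb2
          · exact Or.inr (Or.inl ⟨⟨ha0, ha2⟩, ⟨hb0, hb2⟩⟩)
          · exact Or.inr (Or.inr (Or.inr ⟨⟨hb2, by linarith⟩, ha, by linarith⟩))
        · exact Or.inr (Or.inr (Or.inl ⟨⟨ha2, by linarith⟩, hb, by linarith⟩))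
      have hNzero : ∫⁻ p in N, f p ∂volume = 0 := by
        apply setLIntegral_measure_zero
        apply measure_union_null
        · have : {p : ℝ × ℝ | p.1 = 0} = ({(0:ℝ)} : Set ℝ) ×ˢ (univ : Set ℝ) := by
            ext ⟨x, y⟩; simp [Set.mem_prod, eq_comm]
          rw [this, Measure.volume_eq_prod, Measure.prod_prod]
          simp
        · have : {p : ℝ × ℝ | p.2 = 0} = (univ : Set ℝ) ×ˢ ({(0:ℝ)} : Set ℝ) := by
            ext ⟨x, y⟩; simp [Set.mem_prod, eq_comm]
          rw [this, Measure.volume_eq_prod, Measure.prod_prod]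
          simp
      -- bound on S1
      have hS1fin : ∫⁻ p in S1, f p ∂volume < ⊤ := by
        have hgmeas : Measurable fun p : ℝ × ℝ =>
            ENNReal.ofReal ((4:ℝ) ^ s * p.1 ^ (-(s/2))) *
              ENNReal.ofReal (p.2 ^ (-(s/2))) := by
          exact ((measurable_const.mul (measurable_fst.pow
            measurable_const)).ennreal_ofReal).mul
            ((measurable_snd.pow measurable_const).ennreal_ofReal)
        have hb1 : ∀ p ∈ S1, f p ≤ ENNReal.ofReal ((4:ℝ) ^ s * p.1 ^ (-(s/2))) *
            ENNReal.ofReal (p.2 ^ (-(s/2))) := by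
          rintro ⟨a, b⟩ ⟨ha, hb⟩
          simp only [hf]
          simp only [Set.mem_Ioc] at ha hb
          have ha0 : (0:ℝ) < a := ha.1
          have hb0 : (0:ℝ) < b := hb.1
          have hsum : (0:ℝ) < a + b := by linarith
          have key : ((a + b) * (1 - a) * (1 - b)) ^ (-s)
              ≤ (4:ℝ) ^ s * a ^ (-(s/2)) * b ^ (-(s/2)) := by
            have hge : (a + b) / 4 ≤ (a + b) * (1 - a) * (1 - b) := by
              have h1 : (1:ℝ)/2 ≤ 1 - a := by linarith [ha.2]
              have h2 : (1:ℝ)/2 ≤ 1 - b := by linarith [hb.2]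
              have hq : (1/4:ℝ) ≤ (1 - a) * (1 - b) := by nlinarith
              calc (a + b) / 4 = (a + b) * (1/4) := by ring
                _ ≤ (a + b) * ((1 - a) * (1 - b)) :=
                    mul_le_mul_of_nonneg_left hq hsum.le
                _ = (a + b) * (1 - a) * (1 - b) := by ring
            have step1 : ((a + b) * (1 - a) * (1 - b)) ^ (-s) ≤ ((a + b) / 4) ^ (-s) :=
              Real.rpow_le_rpow_of_nonpos (by positivity) hge (by linarith)
            have step2 : ((a + b) / 4) ^ (-s) = (4:ℝ) ^ s * (a + b) ^ (-s) := by
              rw [Real.div_rpow hsum.le (by norm_num),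
                Real.rpow_neg (by norm_num : (0:ℝ) ≤ 4), div_eq_mul_inv, inv_inv]
              ring
            have step3 : (a + b) ^ (-s) ≤ a ^ (-(s/2)) * b ^ (-(s/2)) := by
              have hsplit : (a + b) ^ (-s)
                  = (a + b) ^ (-(s/2)) * (a + b) ^ (-(s/2)) := by
                rw [← Real.rpow_add hsum]
                congr 1; ring
              rw [hsplit]
              apply mul_le_mul
              · exact Real.rpow_le_rpow_of_nonpos ha0 (by linarith) (by linarith)
              · exact Real.rpow_le_rpow_of_nonpos hb0 (by linarith) (by linarith)
              · exact Real.rpow_nonneg hsum.le _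
              · exact Real.rpow_nonneg ha0.le _
            calc ((a + b) * (1 - a) * (1 - b)) ^ (-s) ≤ (4:ℝ) ^ s * (a + b) ^ (-s) := by
                  rw [← step2]; exact step1
              _ ≤ (4:ℝ) ^ s * (a ^ (-(s/2)) * b ^ (-(s/2))) := by
                  apply mul_le_mul_of_nonneg_left step3 (Real.rpow_nonneg (by norm_num) _)
              _ = (4:ℝ) ^ s * a ^ (-(s/2)) * b ^ (-(s/2)) := by ring
          calc ENNReal.ofReal (((a + b) * (1 - a) * (1 - b)) ^ (-s))
              ≤ ENNReal.ofReal ((4:ℝ) ^ s * a ^ (-(s/2)) * b ^ (-(s/2))) :=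
                ENNReal.ofReal_le_ofReal key
            _ = ENNReal.ofReal ((4:ℝ) ^ s * a ^ (-(s/2))) *
                ENNReal.ofReal (b ^ (-(s/2))) := by
                rw [ENNReal.ofReal_mul (by positivity)]
        calc ∫⁻ p in S1, f p ∂volume
            ≤ ∫⁻ p in S1, ENNReal.ofReal ((4:ℝ) ^ s * p.1 ^ (-(s/2))) *
              ENNReal.ofReal (p.2 ^ (-(s/2))) ∂volume := setLIntegral_mono hgmeas hb1
          _ = (∫⁻ a in Ioc (0:ℝ) (1/2), ENNReal.ofReal ((4:ℝ) ^ s * a ^ (-(s/2))) ∂volume) *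
              ∫⁻ b in Ioc (0:ℝ) (1/2), ENNReal.ofReal (b ^ (-(s/2))) ∂volume := by
              rw [hS1, Measure.volume_eq_prod, ← Measure.prod_restrict]
              exact lintegral_prod_mul
                ((measurable_const.mul (measurable_id.pow
                  measurable_const)).ennreal_ofReal).aemeasurable
                ((measurable_id.pow measurable_const).ennreal_ofReal).aemeasurable
          _ < ⊤ := by
              apply ENNReal.mul_lt_top
              · have : ∀ a : ℝ, ENNReal.ofReal ((4:ℝ) ^ s * a ^ (-(s/2)))
                    = ENNReal.ofReal ((4:ℝ) ^ s) * ENNReal.ofReal (a ^ (-(s/2))) := by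
                  intro a
                  rw [ENNReal.ofReal_mul (Real.rpow_nonneg (by norm_num) _)]
                simp only [this]
                rw [lintegral_const_mul' _ _ ENNReal.ofReal_ne_top]
                exact ENNReal.mul_lt_top ENNReal.ofReal_lt_top
                  (oneD (-(s/2)) (1/2) (by norm_num) (by linarith))
              · exact oneD (-(s/2)) (1/2) (by norm_num) (by linarith)
      -- bound on W2
      have hW2fin : ∫⁻ p in W2, f p ∂volume < ⊤ := by
        have hb2 : ∀ p ∈ W2, f p ≤ ENNReal.ofReal ((4:ℝ) ^ s * (1 - p.1) ^ (-s)) := by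
          rintro ⟨a, b⟩ ⟨ha, hb⟩
          simp only [hf]
          apply ENNReal.ofReal_le_ofReal
          simp only [Set.mem_Ioo, Set.mem_Icc] at ha hb
          have h1a : (0:ℝ) < 1 - a := by linarith [ha.2]
          have hge : (1 - a) / 4 ≤ (a + b) * (1 - a) * (1 - b) := by
            have h1 : (1:ℝ)/2 ≤ a + b := by linarith [ha.1, hb.1]
            have h2 : (1:ℝ)/2 ≤ 1 - b := by linarith [hb.2, ha.1]
            have hq : (1/4:ℝ) ≤ (a + b) * (1 - b) := by nlinarith
            calc (1 - a) / 4 = (1/4) * (1 - a) := by ring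
              _ ≤ ((a + b) * (1 - b)) * (1 - a) :=
                  mul_le_mul_of_nonneg_right hq h1a.le
              _ = (a + b) * (1 - a) * (1 - b) := by ring
          have step1 : ((a + b) * (1 - a) * (1 - b)) ^ (-s) ≤ ((1 - a) / 4) ^ (-s) :=
            Real.rpow_le_rpow_of_nonpos (by positivity) hge (by linarith)
          have step2 : ((1 - a) / 4) ^ (-s) = (4:ℝ) ^ s * (1 - a) ^ (-s) := by
            rw [Real.div_rpow h1a.le (by norm_num),
              Real.rpow_neg (by norm_num : (0:ℝ) ≤ 4), div_eq_mul_inv, inv_inv]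
            ring
          rw [← step2]; exact step1
        calc ∫⁻ p in W2, f p ∂volume
            ≤ ∫⁻ p in W2, ENNReal.ofReal ((4:ℝ) ^ s * (1 - p.1) ^ (-s)) ∂volume :=
              setLIntegral_mono ((measurable_const.mul
                ((measurable_const.sub measurable_fst).pow
                  measurable_const)).ennreal_ofReal) hb2
          _ < ⊤ := corner_int s ((4:ℝ) ^ s) hs (Real.rpow_nonneg (by norm_num) _)
      -- bound on W3
      have hW3fin : ∫⁻ p in W3, f p ∂volume < ⊤ := by
        have hb3 : ∀ p ∈ W3, f p ≤ ENNReal.ofReal ((4:ℝ) ^ s * (1 - p.2) ^ (-s)) := by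
          rintro ⟨a, b⟩ ⟨hb, ha⟩
          simp only [hf]
          apply ENNReal.ofReal_le_ofReal
          simp only [Set.mem_Ioo, Set.mem_Icc] at ha hb
          have h1b : (0:ℝ) < 1 - b := by linarith [hb.2]
          have hge : (1 - b) / 4 ≤ (a + b) * (1 - a) * (1 - b) := by
            have h1 : (1:ℝ)/2 ≤ a + b := by linarith [hb.1, ha.1]
            have h2 : (1:ℝ)/2 ≤ 1 - a := by linarith [ha.2, hb.1]
            have hq : (1/4:ℝ) ≤ (a + b) * (1 - a) := by nlinarith
            calc (1 - b) / 4 = (1/4) * (1 - b) := by ring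
              _ ≤ ((a + b) * (1 - a)) * (1 - b) :=
                  mul_le_mul_of_nonneg_right hq h1b.le
              _ = (a + b) * (1 - a) * (1 - b) := by ring
          have step1 : ((a + b) * (1 - a) * (1 - b)) ^ (-s) ≤ ((1 - b) / 4) ^ (-s) :=
            Real.rpow_le_rpow_of_nonpos (by positivity) hge (by linarith)
          have step2 : ((1 - b) / 4) ^ (-s) = (4:ℝ) ^ s * (1 - b) ^ (-s) := by
            rw [Real.div_rpow h1b.le (by norm_num),
              Real.rpow_neg (by norm_num : (0:ℝ) ≤ 4), div_eq_mul_inv, inv_inv]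
            ring
          rw [← step2]; exact step1
        have hW2meas : MeasurableSet W2 := by
          have : W2 = ({p : ℝ × ℝ | 1/2 < p.1} ∩ {p | p.1 < 1}) ∩
              ({p | 0 ≤ p.2} ∩ {p | p.2 ≤ 1 - p.1}) := by
            ext p; simp [hW2, and_assoc]
          rw [this]
          exact (((measurableSet_lt measurable_const measurable_fst).inter
            (measurableSet_lt measurable_fst measurable_const)).inter
            ((measurableSet_le measurable_const measurable_snd).inter
            (measurableSet_le measurable_snd (measurable_const.sub measurable_fst))))
        have hW3meas : MeasurableSet W3 := by
          have : W3 = ({p : ℝ × ℝ | 1/2 < p.2} ∩ {p | p.2 < 1}) ∩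
              ({p | 0 ≤ p.1} ∩ {p | p.1 ≤ 1 - p.2}) := by
            ext p; simp [hW3, and_assoc]
          rw [this]
          exact (((measurableSet_lt measurable_const measurable_snd).inter
            (measurableSet_lt measurable_snd measurable_const)).inter
            ((measurableSet_le measurable_const measurable_fst).inter
            (measurableSet_le measurable_fst (measurable_const.sub measurable_snd))))
        have hswap : ∫⁻ p in W3, ENNReal.ofReal ((4:ℝ) ^ s * (1 - p.2) ^ (-s)) ∂volume
            = ∫⁻ p in W2, ENNReal.ofReal ((4:ℝ) ^ s * (1 - p.1) ^ (-s)) ∂volume := by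
          rw [← lintegral_indicator hW3meas, ← lintegral_indicator hW2meas,
            Measure.volume_eq_prod,
            ← lintegral_prod_swap (W2.indicator
              (fun p : ℝ × ℝ => ENNReal.ofReal ((4:ℝ) ^ s * (1 - p.1) ^ (-s))))]
          congr 1
        calc ∫⁻ p in W3, f p ∂volume
            ≤ ∫⁻ p in W3, ENNReal.ofReal ((4:ℝ) ^ s * (1 - p.2) ^ (-s)) ∂volume :=
              setLIntegral_mono ((measurable_const.mul
                ((measurable_const.sub measurable_snd).pow
                  measurable_const)).ennreal_ofReal) hb3
          _ = ∫⁻ p in W2, ENNReal.ofReal ((4:ℝ) ^ s * (1 - p.1) ^ (-s)) ∂volume := hswap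
          _ < ⊤ := corner_int s ((4:ℝ) ^ s) hs (Real.rpow_nonneg (by norm_num) _)
      calc ∫⁻ p in T, f p ∂volume
          ≤ ∫⁻ p in N ∪ (S1 ∪ (W2 ∪ W3)), f p ∂volume := lintegral_mono_set cover
        _ ≤ (∫⁻ p in N, f p ∂volume) + ∫⁻ p in S1 ∪ (W2 ∪ W3), f p ∂volume :=
            lintegral_union_le _ _ _
        _ ≤ (∫⁻ p in N, f p ∂volume) + ((∫⁻ p in S1, f p ∂volume) +
              ∫⁻ p in W2 ∪ W3, f p ∂volume) :=
            add_le_add le_rfl (lintegral_union_le _ _ _)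
        _ ≤ (∫⁻ p in N, f p ∂volume) + ((∫⁻ p in S1, f p ∂volume) +
              ((∫⁻ p in W2, f p ∂volume) + ∫⁻ p in W3, f p ∂volume)) :=
            add_le_add le_rfl (add_le_add le_rfl (lintegral_union_le _ _ _))
        _ < ⊤ := by
            rw [hNzero, zero_add]
            exact ENNReal.add_lt_top.2 ⟨hS1fin, ENNReal.add_lt_top.2 ⟨hW2fin, hW3fin⟩⟩
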